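/- Let m ∈ ℕ and a_1,…,a_m distinct points in the open upper half-plane, b_1,…,b_m distinct points in the open lower half-plane, and α, β ∈ ℂ^m solutions of the Vandermonde systems V(a)α = e_1 and V(b)β = e_1 (where V(c)_{jk} = c_k^{j-1} and e_1 = (1,0,…,0)^T). Define K(x) = (1/(2πi)) ∑_{j=1}^{m} (α_j/(x - a_j) - β_j/(x - b_j)). Then ∫_ℝ K(x) dx = 1 and ∫_ℝ K(x) x^j dx = 0 for j = 1,…,m-1, and |K(x)| ≤ C(1+|x|)^{-(m+1)} for some constant C. -/

import Mathlib

open MeasureTheory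

open Complex Filter Finset Topology

noncomputable def rk_f (p c : ℂ) (x : ℝ) : ℂ := 1 / ((x:ℂ) - p) - 1 / ((x:ℂ) - c)

lemma rk_sub_ne (p : ℂ) (hp : p.im ≠ 0) (x : ℝ) : (x:ℂ) - p ≠ 0 := by
  intro h
  have : ((x:ℂ) - p).im = 0 := by rw [h]; simp
  simp [Complex.sub_im] at this
  exact hp this

lemma rk_sq_bound (p : ℂ) (hp : p.im ≠ 0) :
    ∃ c > 0, ∀ x : ℝ, c * (1 + x ^ 2) ≤ ‖(x:ℂ) - p‖ ^ 2 := by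
  refine ⟨min (1/2) (p.im ^ 2 / (1 + 2 * p.re ^ 2)), ?_, ?_⟩
  · have h1 : 0 < p.im ^ 2 := by positivity
    have h2 : (0:ℝ) < 1 + 2 * p.re ^ 2 := by positivity
    exact lt_min (by norm_num) (div_pos h1 h2)
  · intro x
    have habs : ‖(x:ℂ) - p‖ ^ 2 = (x - p.re) ^ 2 + p.im ^ 2 := by
      rw [Complex.sq_norm, Complex.normSq_apply]
      simp [Complex.sub_re, Complex.sub_im]
      ring
    rw [habs]
    have h2 : (0:ℝ) < 1 + 2 * p.re ^ 2 := by positivity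
    have hm1 : min (1/2) (p.im ^ 2 / (1 + 2 * p.re ^ 2)) ≤ 1/2 := min_le_left _ _
    have hm2 : min (1/2) (p.im ^ 2 / (1 + 2 * p.re ^ 2)) ≤ p.im ^ 2 / (1 + 2 * p.re ^ 2) :=
      min_le_right _ _
    have hm2' : min (1/2) (p.im ^ 2 / (1 + 2 * p.re ^ 2)) * (1 + 2 * p.re ^ 2) ≤ p.im ^ 2 := by
      calc min (1/2) (p.im ^ 2 / (1 + 2 * p.re ^ 2)) * (1 + 2 * p.re ^ 2)
          ≤ p.im ^ 2 / (1 + 2 * p.re ^ 2) * (1 + 2 * p.re ^ 2) :=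
            mul_le_mul_of_nonneg_right hm2 h2.le
        _ = p.im ^ 2 := div_mul_cancel₀ _ h2.ne'
    have hm0 : 0 ≤ min (1/2) (p.im ^ 2 / (1 + 2 * p.re ^ 2)) := by positivity
    nlinarith [mul_nonneg hm0 (sq_nonneg (x - 2*p.re)),
      mul_nonneg (by linarith : (0:ℝ) ≤ 1/2 - min (1/2) (p.im ^ 2 / (1 + 2 * p.re ^ 2)))
        (sq_nonneg (x - p.re))]

lemma rk_integrable (p c : ℂ) (hp : p.im ≠ 0) (hc : c.im ≠ 0) :
    Integrable (rk_f p c) := by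
  obtain ⟨d1, hd1, hb1⟩ := rk_sq_bound p hp
  obtain ⟨d2, hd2, hb2⟩ := rk_sq_bound c hc
  have hcont : Continuous (rk_f p c) := by
    apply Continuous.sub
    · exact continuous_const.div (by continuity) (fun x => rk_sub_ne p hp x)
    · exact continuous_const.div (by continuity) (fun x => rk_sub_ne c hc x)
  set D := Real.sqrt (d1 * d2) with hD
  have hDpos : 0 < D := Real.sqrt_pos.mpr (mul_pos hd1 hd2)
  set M := ‖p - c‖ / D with hM
  refine (integrable_inv_one_add_sq.const_mul M).mono' hcont.aestronglyMeasurable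
    (Filter.Eventually.of_forall fun x => ?_)
  have hx2 : (0:ℝ) < 1 + x ^ 2 := by positivity
  have hid : rk_f p c x = (p - c) / (((x:ℂ) - p) * ((x:ℂ) - c)) := by
    rw [rk_f]
    field_simp [rk_sub_ne p hp x, rk_sub_ne c hc x]
    ring
  have hkey : D * (1 + x ^ 2) ≤ ‖(x:ℂ) - p‖ * ‖(x:ℂ) - c‖ := by
    have h1 : (D * (1 + x ^ 2)) ^ 2 ≤ (‖(x:ℂ) - p‖ * ‖(x:ℂ) - c‖) ^ 2 := by
      rw [mul_pow, mul_pow, hD, Real.sq_sqrt (mul_pos hd1 hd2).le]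
      calc d1 * d2 * (1 + x ^ 2) ^ 2 = (d1 * (1 + x ^ 2)) * (d2 * (1 + x ^ 2)) := by ring
        _ ≤ ‖(x:ℂ) - p‖ ^ 2 * ‖(x:ℂ) - c‖ ^ 2 :=
          mul_le_mul (hb1 x) (hb2 x) (by positivity) (by positivity)
    calc D * (1 + x ^ 2) = Real.sqrt ((D * (1 + x ^ 2)) ^ 2) :=
          (Real.sqrt_sq (by positivity)).symm
      _ ≤ Real.sqrt ((‖(x:ℂ) - p‖ * ‖(x:ℂ) - c‖) ^ 2) :=
          Real.sqrt_le_sqrt h1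
      _ = _ := Real.sqrt_sq (by positivity)
  have hden : (0:ℝ) < ‖(x:ℂ) - p‖ * ‖(x:ℂ) - c‖ :=
    mul_pos (norm_pos_iff.mpr (rk_sub_ne p hp x)) (norm_pos_iff.mpr (rk_sub_ne c hc x))
  calc ‖rk_f p c x‖ = ‖p - c‖ / (‖(x:ℂ) - p‖ * ‖(x:ℂ) - c‖) := by
        rw [hid]; simp [map_div₀, map_mul]
    _ ≤ ‖p - c‖ / (D * (1 + x ^ 2)) :=
        div_le_div_of_nonneg_left (norm_nonneg _) (by positivity) hkey
    _ = M * (1 + x ^ 2)⁻¹ := by rw [hM]; field_simp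

lemma rk_slit (p : ℂ) (hp : p.im ≠ 0) (x : ℝ) : (x:ℂ) - p ∈ Complex.slitPlane := by
  rw [Complex.mem_slitPlane_iff]
  right
  simp [Complex.sub_im]
  exact hp

lemma rk_hasDerivAt (p : ℂ) (hp : p.im ≠ 0) (x : ℝ) :
    HasDerivAt (fun y : ℝ => Complex.log ((y:ℂ) - p)) (1 / ((x:ℂ) - p)) x := by
  have h1 : HasDerivAt (fun z : ℂ => Complex.log (z - p)) (((x:ℂ) - p)⁻¹) (x:ℂ) := by
    have := (Complex.hasDerivAt_log (rk_slit p hp x)).comp (x:ℂ)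
      ((hasDerivAt_id ((x:ℂ))).sub_const p)
    simpa [Function.comp_def] using this
  simpa [one_div] using h1.comp_ofReal

lemma rk_tendsto_div (p : ℂ) : Tendsto (fun R : ℝ => p / (R:ℂ)) atTop (𝓝 0) := by
  have h : Tendsto (fun R : ℝ => ((R⁻¹ : ℝ) : ℂ)) atTop (𝓝 ((0:ℝ):ℂ)) :=
    (Complex.continuous_ofReal.tendsto _).comp tendsto_inv_atTop_zero
  have := h.const_mul p
  simpa [div_eq_mul_inv, Complex.ofReal_inv] using this

lemma rk_im_ne (p : ℂ) (hp : p.im ≠ 0) {R : ℝ} (hR : 0 < R) (u : ℂ) :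
    (u - p / (R:ℂ)).im = u.im - p.im / R := by
  simp [Complex.sub_im]

lemma rk_G_limit (p : ℂ) (hp : p.im ≠ 0) :
    Tendsto (fun R : ℝ => Complex.log ((R:ℂ) - p) - Complex.log (-(R:ℂ) - p)) atTop
      (𝓝 (if 0 < p.im then (Real.pi : ℂ) * Complex.I else -((Real.pi : ℂ) * Complex.I))) := by
  have hne : ∀ {R : ℝ}, 0 < R → ∀ u : ℂ, u.im = 0 → u - p / (R:ℂ) ≠ 0 := by
    intro R hR u hu h
    have h2 : (u - p / (R:ℂ)).im = 0 := by rw [h]; simp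
    rw [rk_im_ne p hp hR, hu] at h2
    have : p.im / R = 0 := by linarith
    exact hp ((div_eq_zero_iff.mp this).resolve_right (by exact_mod_cast hR.ne'))
  have hev : ∀ᶠ R : ℝ in atTop,
      Complex.log ((R:ℂ) - p) - Complex.log (-(R:ℂ) - p)
        = Complex.log (1 - p / (R:ℂ)) - Complex.log (-1 - p / (R:ℂ)) := by
    filter_upwards [eventually_gt_atTop (0:ℝ)] with R hR
    have e1 : (R:ℂ) - p = (R:ℝ) * (1 - p / (R:ℂ)) := by
      have hR0 : ((R:ℝ):ℂ) ≠ 0 := by exact_mod_cast hR.ne'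
      field_simp
    have e2 : -(R:ℂ) - p = (R:ℝ) * (-1 - p / (R:ℂ)) := by
      have hR0 : ((R:ℝ):ℂ) ≠ 0 := by exact_mod_cast hR.ne'
      field_simp
    rw [e1, e2, Complex.log_ofReal_mul hR (hne hR 1 (by simp)),
      Complex.log_ofReal_mul hR (hne hR (-1) (by simp))]
    ring
  have hq : Tendsto (fun R : ℝ => p / (R:ℂ)) atTop (𝓝 0) := rk_tendsto_div p
  have h1 : Tendsto (fun R : ℝ => Complex.log (1 - p / (R:ℂ))) atTop (𝓝 0) := by
    have : Tendsto (fun R : ℝ => 1 - p / (R:ℂ)) atTop (𝓝 1) := by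
      simpa using (tendsto_const_nhds.sub hq)
    have hc : ContinuousAt Complex.log 1 := continuousAt_clog (by simp)
    simpa [Function.comp_def] using hc.tendsto.comp this
  rcases hp.lt_or_gt with hneg | hpos
  · -- p.im < 0 : -1 - p/R has positive imaginary part, limit log(-1) = πI
    have h2 : Tendsto (fun R : ℝ => Complex.log (-1 - p / (R:ℂ))) atTop
        (𝓝 ((Real.pi : ℂ) * Complex.I)) := by
      have hmem : Tendsto (fun R : ℝ => -1 - p / (R:ℂ)) atTop
          (𝓝[{z : ℂ | 0 ≤ z.im}] (-1)) := by
        rw [tendsto_nhdsWithin_iff]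
        constructor
        · simpa using (tendsto_const_nhds.sub hq)
        · filter_upwards [eventually_gt_atTop (0:ℝ)] with R hR
          have := rk_im_ne p hp hR (-1)
          simp only [Set.mem_setOf_eq, this]
          have : p.im / R < 0 := div_neg_of_neg_of_pos hneg hR
          simp [Complex.neg_im, Complex.one_im]
          linarith
      have hlog := (Complex.continuousWithinAt_log_of_re_neg_of_im_zero
        (by norm_num : (-1:ℂ).re < 0) (by simp)).tendsto.comp hmem
      simpa [Complex.log_neg_one, Function.comp_def] using hlog
    rw [if_neg (not_lt.mpr hneg.le)]
    have := h1.sub h2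
    rw [zero_sub] at this
    exact Tendsto.congr' (Filter.EventuallyEq.symm hev) this
  · -- p.im > 0 : -1 - p/R has negative imaginary part, limit -πI
    have h2 : Tendsto (fun R : ℝ => Complex.log (-1 - p / (R:ℂ))) atTop
        (𝓝 (-((Real.pi : ℂ) * Complex.I))) := by
      have hmem : Tendsto (fun R : ℝ => -1 - p / (R:ℂ)) atTop
          (𝓝[{z : ℂ | z.im < 0}] (-1)) := by
        rw [tendsto_nhdsWithin_iff]
        constructor
        · simpa using (tendsto_const_nhds.sub hq)
        · filter_upwards [eventually_gt_atTop (0:ℝ)] with R hR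
          have := rk_im_ne p hp hR (-1)
          simp only [Set.mem_setOf_eq, this]
          have : 0 < p.im / R := div_pos hpos hR
          simp [Complex.neg_im, Complex.one_im]
          linarith
      have hlog := (Complex.tendsto_log_nhdsWithin_im_neg_of_re_neg_of_im_zero
        (by norm_num : (-1:ℂ).re < 0) (by simp)).comp hmem
      simpa [Function.comp_def] using hlog
    rw [if_pos hpos]
    have := h1.sub h2
    rw [zero_sub, neg_neg] at this
    exact Tendsto.congr' (Filter.EventuallyEq.symm hev) this

noncomputable def rk_L (p : ℂ) : ℂ :=
  if 0 < p.im then (Real.pi : ℂ) * Complex.I else -((Real.pi : ℂ) * Complex.I)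

lemma rk_integral (p c : ℂ) (hp : p.im ≠ 0) (hc : c.im ≠ 0) :
    ∫ x : ℝ, rk_f p c x = rk_L p - rk_L c := by
  have hint := rk_integrable p c hp hc
  have h1 : Tendsto (fun R : ℝ => ∫ x in (-R)..R, rk_f p c x) atTop
      (𝓝 (∫ x : ℝ, rk_f p c x)) :=
    intervalIntegral_tendsto_integral hint tendsto_neg_atTop_atBot tendsto_id
  have h2 : ∀ R : ℝ, (∫ x in (-R)..R, rk_f p c x)
      = (Complex.log ((R:ℂ) - p) - Complex.log ((R:ℂ) - c))
        - (Complex.log ((-R:ℝ) - p) - Complex.log ((-R:ℝ) - c)) := by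
    intro R
    exact intervalIntegral.integral_eq_sub_of_hasDerivAt
      (fun x _ => (rk_hasDerivAt p hp x).sub (rk_hasDerivAt c hc x))
      hint.intervalIntegrable
  have h3 : Tendsto (fun R : ℝ => (Complex.log ((R:ℂ) - p) - Complex.log ((R:ℂ) - c))
        - (Complex.log ((-R:ℝ) - p) - Complex.log ((-R:ℝ) - c))) atTop
      (𝓝 (rk_L p - rk_L c)) := by
    have := (rk_G_limit p hp).sub (rk_G_limit c hc)
    refine this.congr fun R => ?_
    push_cast
    ring
  exact tendsto_nhds_unique (h1.congr fun R => (h2 R)) h3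

lemma rk_integral_ud (p c : ℂ) (hp : 0 < p.im) (hc : c.im < 0) :
    ∫ x : ℝ, rk_f p c x = 2 * (Real.pi : ℂ) * Complex.I := by
  rw [rk_integral p c hp.ne' hc.ne, rk_L, rk_L, if_pos hp, if_neg (not_lt.mpr hc.le)]
  ring

lemma rk_integral_dd (p c : ℂ) (hp : p.im < 0) (hc : c.im < 0) :
    ∫ x : ℝ, rk_f p c x = 0 := by
  rw [rk_integral p c hp.ne hc.ne, rk_L, rk_L, if_neg (not_lt.mpr hp.le),
    if_neg (not_lt.mpr hc.le)]
  ring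

lemma rk_key_integral {m : ℕ} (hm : 1 ≤ m) (a b : Fin m → ℂ)
    (haim : ∀ j, 0 < (a j).im) (hbim : ∀ j, (b j).im < 0)
    (γ δ : Fin m → ℂ) (hsum : ∑ j, γ j = ∑ j, δ j) :
    ∫ x : ℝ, ∑ j, (γ j / ((x:ℂ) - a j) - δ j / ((x:ℂ) - b j))
      = 2 * (Real.pi : ℂ) * Complex.I * ∑ j, γ j := by
  set c : ℂ := b ⟨0, hm⟩ with hcdef
  have hcim : c.im < 0 := hbim _
  have hpt : ∀ x : ℝ, (∑ j, (γ j / ((x:ℂ) - a j) - δ j / ((x:ℂ) - b j)))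
      = ∑ j, (γ j * rk_f (a j) c x - δ j * rk_f (b j) c x) := by
    intro x
    have expand : ∀ j, γ j * rk_f (a j) c x - δ j * rk_f (b j) c x
        = (γ j / ((x:ℂ) - a j) - δ j / ((x:ℂ) - b j)) - (γ j - δ j) * (1 / ((x:ℂ) - c)) := by
      intro j
      simp only [rk_f]
      ring
    refine Eq.symm ?_
    calc ∑ j, (γ j * rk_f (a j) c x - δ j * rk_f (b j) c x)
        = ∑ j, ((γ j / ((x:ℂ) - a j) - δ j / ((x:ℂ) - b j)) - (γ j - δ j) * (1 / ((x:ℂ) - c))) :=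
          Finset.sum_congr rfl (fun j _ => expand j)
      _ = (∑ j, (γ j / ((x:ℂ) - a j) - δ j / ((x:ℂ) - b j)))
            - (∑ j, (γ j - δ j)) * (1 / ((x:ℂ) - c)) := by
          rw [Finset.sum_sub_distrib, Finset.sum_mul]
      _ = ∑ j, (γ j / ((x:ℂ) - a j) - δ j / ((x:ℂ) - b j)) := by
          rw [show (∑ j, (γ j - δ j)) = 0 by rw [Finset.sum_sub_distrib, hsum, sub_self],
            zero_mul, sub_zero]
  have hint : ∀ j : Fin m, Integrable (fun x : ℝ => γ j * rk_f (a j) c x - δ j * rk_f (b j) c x) := by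
    intro j
    exact ((rk_integrable (a j) c (haim j).ne' hcim.ne).const_mul (γ j)).sub
      ((rk_integrable (b j) c (hbim j).ne hcim.ne).const_mul (δ j))
  calc ∫ x : ℝ, ∑ j, (γ j / ((x:ℂ) - a j) - δ j / ((x:ℂ) - b j))
      = ∫ x : ℝ, ∑ j, (γ j * rk_f (a j) c x - δ j * rk_f (b j) c x) := by
        congr 1; funext x; exact hpt x
    _ = ∑ j, ∫ x : ℝ, (γ j * rk_f (a j) c x - δ j * rk_f (b j) c x) :=
        integral_finset_sum _ (fun j _ => hint j)
    _ = ∑ j, (γ j * (2 * (Real.pi : ℂ) * Complex.I) - δ j * 0) := by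
        refine Finset.sum_congr rfl fun j _ => ?_
        rw [integral_sub ((rk_integrable (a j) c (haim j).ne' hcim.ne).const_mul (γ j))
          ((rk_integrable (b j) c (hbim j).ne hcim.ne).const_mul (δ j)),
          integral_const_mul, integral_const_mul,
          rk_integral_ud (a j) c (haim j) hcim, rk_integral_dd (b j) c (hbim j) hcim]
    _ = 2 * (Real.pi : ℂ) * Complex.I * ∑ j, γ j := by
        simp only [mul_zero, sub_zero, ← Finset.sum_mul]
        rw [mul_comm]

lemma rk_poly_part {m : ℕ} (α : Fin m → ℂ) (a : Fin m → ℂ) (hα1 : ∑ j, α j = 1)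
    (hαv : ∀ ℓ : ℕ, 1 ≤ ℓ → ℓ ≤ m - 1 → ∑ j, α j * a j ^ ℓ = 0)
    (ℓ : ℕ) (h1 : 1 ≤ ℓ) (h2 : ℓ ≤ m) (x : ℂ) :
    ∑ j, α j * ∑ k ∈ Finset.range ℓ, x ^ k * a j ^ (ℓ - 1 - k) = x ^ (ℓ - 1) := by
  have inner : ∀ k ∈ Finset.range ℓ,
      (∑ j, α j * (x ^ k * a j ^ (ℓ - 1 - k))) = if k = ℓ - 1 then x ^ (ℓ - 1) else 0 := by
    intro k hk
    rw [Finset.mem_range] at hk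
    by_cases h : k = ℓ - 1
    · subst h
      rw [if_pos rfl]
      simp only [Nat.sub_self, pow_zero, mul_one]
      rw [← Finset.sum_mul, hα1, one_mul]
    · rw [if_neg h]
      have he1 : 1 ≤ ℓ - 1 - k := by omega
      have he2 : ℓ - 1 - k ≤ m - 1 := by omega
      calc ∑ j, α j * (x ^ k * a j ^ (ℓ - 1 - k))
          = x ^ k * ∑ j, α j * a j ^ (ℓ - 1 - k) := by
            rw [Finset.mul_sum]
            exact Finset.sum_congr rfl fun j _ => by ring
        _ = 0 := by rw [hαv _ he1 he2, mul_zero]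
  calc ∑ j, α j * ∑ k ∈ Finset.range ℓ, x ^ k * a j ^ (ℓ - 1 - k)
      = ∑ k ∈ Finset.range ℓ, ∑ j, α j * (x ^ k * a j ^ (ℓ - 1 - k)) := by
        simp only [Finset.mul_sum]
        exact Finset.sum_comm
    _ = ∑ k ∈ Finset.range ℓ, (if k = ℓ - 1 then x ^ (ℓ - 1) else 0) :=
        Finset.sum_congr rfl inner
    _ = x ^ (ℓ - 1) := by
        rw [Finset.sum_ite_eq' (Finset.range ℓ) (ℓ - 1)]
        rw [if_pos (Finset.mem_range.mpr (by omega))]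

lemma rk_term_shift (w p x : ℂ) (hp : x - p ≠ 0) (ℓ : ℕ) :
    w / (x - p) * x ^ ℓ
      = w * p ^ ℓ / (x - p) + w * ∑ k ∈ Finset.range ℓ, x ^ k * p ^ (ℓ - 1 - k) := by
  have hg := geom_sum₂_mul x p ℓ
  set S := ∑ k ∈ Finset.range ℓ, x ^ k * p ^ (ℓ - 1 - k) with hS
  calc w / (x - p) * x ^ ℓ = (w * p ^ ℓ + w * S * (x - p)) / (x - p) := by
        rw [show w * p ^ ℓ + w * S * (x - p) = w * x ^ ℓ by linear_combination w * hg]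
        ring
    _ = w * p ^ ℓ / (x - p) + w * S := by
        rw [add_div, mul_div_cancel_right₀ _ hp]

lemma rk_moment_shift {m : ℕ} (a b : Fin m → ℂ)
    (haim : ∀ j, 0 < (a j).im) (hbim : ∀ j, (b j).im < 0)
    (α β : Fin m → ℂ) (hα1 : ∑ j, α j = 1) (hβ1 : ∑ j, β j = 1)
    (hαv : ∀ ℓ : ℕ, 1 ≤ ℓ → ℓ ≤ m - 1 → ∑ j, α j * a j ^ ℓ = 0)
    (hβv : ∀ ℓ : ℕ, 1 ≤ ℓ → ℓ ≤ m - 1 → ∑ j, β j * b j ^ ℓ = 0)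
    (ℓ : ℕ) (hℓ1 : 1 ≤ ℓ) (hℓ2 : ℓ ≤ m - 1) (x : ℝ) :
    (∑ j, (α j / ((x:ℂ) - a j) - β j / ((x:ℂ) - b j))) * (x:ℂ) ^ ℓ
      = ∑ j, (α j * a j ^ ℓ / ((x:ℂ) - a j) - β j * b j ^ ℓ / ((x:ℂ) - b j)) := by
  have hm : 1 ≤ m := by omega
  calc (∑ j, (α j / ((x:ℂ) - a j) - β j / ((x:ℂ) - b j))) * (x:ℂ) ^ ℓ
      = ∑ j, (α j / ((x:ℂ) - a j) * (x:ℂ) ^ ℓ - β j / ((x:ℂ) - b j) * (x:ℂ) ^ ℓ) := by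
        rw [Finset.sum_mul]
        exact Finset.sum_congr rfl fun j _ => by ring
    _ = ∑ j, ((α j * a j ^ ℓ / ((x:ℂ) - a j) - β j * b j ^ ℓ / ((x:ℂ) - b j))
          + (α j * ∑ k ∈ Finset.range ℓ, (x:ℂ) ^ k * a j ^ (ℓ - 1 - k)
            - β j * ∑ k ∈ Finset.range ℓ, (x:ℂ) ^ k * b j ^ (ℓ - 1 - k))) := by
        refine Finset.sum_congr rfl fun j _ => ?_
        rw [rk_term_shift (α j) (a j) _ (rk_sub_ne (a j) (haim j).ne' x) ℓ,
          rk_term_shift (β j) (b j) _ (rk_sub_ne (b j) (hbim j).ne x) ℓ]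
        ring
    _ = ∑ j, (α j * a j ^ ℓ / ((x:ℂ) - a j) - β j * b j ^ ℓ / ((x:ℂ) - b j)) := by
        rw [Finset.sum_add_distrib,
          show (∑ j, (α j * ∑ k ∈ Finset.range ℓ, (x:ℂ) ^ k * a j ^ (ℓ - 1 - k)
              - β j * ∑ k ∈ Finset.range ℓ, (x:ℂ) ^ k * b j ^ (ℓ - 1 - k))) = 0 by
            rw [Finset.sum_sub_distrib,
              rk_poly_part α a hα1 hαv ℓ hℓ1 (by omega) (x:ℂ),
              rk_poly_part β b hβ1 hβv ℓ hℓ1 (by omega) (x:ℂ), sub_self],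
          add_zero]

lemma rk_term_tail (w p x : ℂ) (hp : x - p ≠ 0) (hx : x ≠ 0) (m : ℕ) :
    w / (x - p)
      = w * p ^ m / ((x - p) * x ^ m)
        + w * (∑ k ∈ Finset.range m, x ^ k * p ^ (m - 1 - k)) / x ^ m := by
  have hg := geom_sum₂_mul x p m
  set S := ∑ k ∈ Finset.range m, x ^ k * p ^ (m - 1 - k) with hS
  have hxm : x ^ m ≠ 0 := pow_ne_zero m hx
  calc w / (x - p) = (w * p ^ m + w * S * (x - p)) / ((x - p) * x ^ m) := by
        rw [show w * p ^ m + w * S * (x - p) = w * x ^ m by linear_combination w * hg]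
        rw [mul_comm (x - p) (x ^ m), ← div_div, mul_div_cancel_right₀ _ hxm]
    _ = w * p ^ m / ((x - p) * x ^ m) + w * S / x ^ m := by
        rw [add_div, mul_comm (x - p) (x ^ m), mul_div_mul_right _ _ hp]

lemma rk_tail_sum {m : ℕ} (hm : 1 ≤ m) (α a : Fin m → ℂ) (him : ∀ j, (a j).im ≠ 0)
    (hα1 : ∑ j, α j = 1)
    (hαv : ∀ ℓ : ℕ, 1 ≤ ℓ → ℓ ≤ m - 1 → ∑ j, α j * a j ^ ℓ = 0)
    (x : ℝ) (hx : (x:ℂ) ≠ 0) :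
    ∑ j, α j / ((x:ℂ) - a j)
      = 1 / (x:ℂ) + ∑ j, α j * a j ^ m / (((x:ℂ) - a j) * (x:ℂ) ^ m) := by
  calc ∑ j, α j / ((x:ℂ) - a j)
      = ∑ j, (α j * a j ^ m / (((x:ℂ) - a j) * (x:ℂ) ^ m)
          + α j * (∑ k ∈ Finset.range m, (x:ℂ) ^ k * a j ^ (m - 1 - k)) / (x:ℂ) ^ m) :=
        Finset.sum_congr rfl fun j _ =>
          rk_term_tail (α j) (a j) (x:ℂ) (rk_sub_ne (a j) (him j) x) hx m
    _ = ∑ j, α j * a j ^ m / (((x:ℂ) - a j) * (x:ℂ) ^ m)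
          + (∑ j, α j * (∑ k ∈ Finset.range m, (x:ℂ) ^ k * a j ^ (m - 1 - k))) / (x:ℂ) ^ m := by
        rw [Finset.sum_add_distrib, Finset.sum_div]
    _ = 1 / (x:ℂ) + ∑ j, α j * a j ^ m / (((x:ℂ) - a j) * (x:ℂ) ^ m) := by
        rw [rk_poly_part α a hα1 hαv m hm le_rfl (x:ℂ)]
        rw [show (x:ℂ) ^ m = (x:ℂ) ^ (m - 1) * (x:ℂ) by
          rw [← pow_succ, Nat.sub_add_cancel hm]]
        rw [div_mul_eq_div_div, div_self (pow_ne_zero _ hx), add_comm]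

lemma rk_decay {m : ℕ} (hm : 1 ≤ m) (a b : Fin m → ℂ)
    (haim : ∀ j, 0 < (a j).im) (hbim : ∀ j, (b j).im < 0)
    (α β : Fin m → ℂ) (hα1 : ∑ j, α j = 1) (hβ1 : ∑ j, β j = 1)
    (hαv : ∀ ℓ : ℕ, 1 ≤ ℓ → ℓ ≤ m - 1 → ∑ j, α j * a j ^ ℓ = 0)
    (hβv : ∀ ℓ : ℕ, 1 ≤ ℓ → ℓ ≤ m - 1 → ∑ j, β j * b j ^ ℓ = 0) :
    ∃ C : ℝ, 0 < C ∧ ∀ x : ℝ,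
      ‖(1 / (2 * (Real.pi : ℂ) * Complex.I)) *
        ∑ j, (α j / ((x : ℂ) - a j) - β j / ((x : ℂ) - b j))‖ ≤
        C / (1 + |x|) ^ (m + 1) := by
  set c₀ : ℂ := 1 / (2 * (Real.pi : ℂ) * Complex.I) with hc₀
  set S : ℝ → ℂ := fun x => ∑ j, (α j / ((x : ℂ) - a j) - β j / ((x : ℂ) - b j)) with hS
  have hc₀n : ‖c₀‖ ≤ 1 := by
    rw [hc₀]
    rw [norm_div, norm_one]
    rw [norm_mul, norm_mul, Complex.norm_I, mul_one]
    have : (1:ℝ) ≤ ‖(2 : ℂ)‖ * ‖((Real.pi : ℝ) : ℂ)‖ := by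
      rw [Complex.norm_ofNat, Complex.norm_real, Real.norm_eq_abs,
        abs_of_pos Real.pi_pos]
      nlinarith [Real.pi_gt_three]
    rw [div_le_one (by linarith)]
    linarith
  -- global bound constants
  obtain ⟨M, hM1, hMa, hMb⟩ :
      ∃ M : ℝ, 1 ≤ M ∧ (∀ j, ‖a j‖ ≤ M) ∧ (∀ j, ‖b j‖ ≤ M) := by
    refine ⟨1 + ∑ j, (‖a j‖ + ‖b j‖), ?_, ?_, ?_⟩
    · have : (0:ℝ) ≤ ∑ j, (‖a j‖ + ‖b j‖) :=
        Finset.sum_nonneg fun j _ => by positivity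
      linarith
    · intro j
      have h1 : ‖a j‖ + ‖b j‖ ≤ ∑ j, (‖a j‖ + ‖b j‖) :=
        Finset.single_le_sum (f := fun j => ‖a j‖ + ‖b j‖)
          (fun j _ => by positivity) (Finset.mem_univ j)
      have : (0:ℝ) ≤ ‖b j‖ := norm_nonneg _
      linarith
    · intro j
      have h1 : ‖a j‖ + ‖b j‖ ≤ ∑ j, (‖a j‖ + ‖b j‖) :=
        Finset.single_le_sum (f := fun j => ‖a j‖ + ‖b j‖)
          (fun j _ => by positivity) (Finset.mem_univ j)
      have : (0:ℝ) ≤ ‖a j‖ := norm_nonneg _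
      linarith
  obtain ⟨D₁, hD₁pos, hD₁ge⟩ :
      ∃ D : ℝ, 0 < D ∧ 2 ^ (m + 2) * M ^ m * (∑ j, (‖α j‖ + ‖β j‖)) ≤ D := by
    refine ⟨2 ^ (m + 2) * M ^ m * (∑ j, (‖α j‖ + ‖β j‖)) + 1, ?_, by linarith⟩
    have h0 : (0:ℝ) ≤ ∑ j, (‖α j‖ + ‖β j‖) :=
      Finset.sum_nonneg fun j _ => by positivity
    have hMp : (0:ℝ) < M := by linarith
    positivity
  -- bound for large |x|
  have hbig : ∀ x : ℝ, 2 * M ≤ |x| → ‖S x‖ ≤ D₁ / (1 + |x|) ^ (m + 1) := by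
    intro x hx
    have ht1 : (1:ℝ) ≤ |x| := by linarith
    have ht0 : (0:ℝ) < |x| := by linarith
    have hx0 : (x:ℂ) ≠ 0 := by
      simp only [ne_eq, Complex.ofReal_eq_zero]
      intro h; rw [h] at ht0; simp at ht0
    have hnx : ‖(x:ℂ)‖ = |x| := by rw [Complex.norm_real, Real.norm_eq_abs]
    -- per-term bound
    have hterm : ∀ (w p : ℂ), ‖p‖ ≤ M →
        ‖w * p ^ m / (((x:ℂ) - p) * (x:ℂ) ^ m)‖
          ≤ 2 ^ (m + 2) * M ^ m * ‖w‖ / (1 + |x|) ^ (m + 1) := by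
      intro w p hpM
      have hd1 : |x| / 2 ≤ ‖(x:ℂ) - p‖ := by
        have := norm_sub_norm_le (x:ℂ) p
        rw [hnx] at this
        linarith
      have hp0 : (0:ℝ) < ‖(x:ℂ) - p‖ :=
        lt_of_lt_of_le (by linarith : (0:ℝ) < |x| / 2) hd1
      have hdpos : (0:ℝ) < ‖(x:ℂ) - p‖ * |x| ^ m := by positivity
      have hDenpos : (0:ℝ) < (1 + |x|) ^ (m + 1) := by positivity
      rw [norm_div, norm_mul, norm_mul, norm_pow, norm_pow, hnx]
      rw [div_le_div_iff₀ hdpos hDenpos]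
      have hnum : ‖w‖ * ‖p‖ ^ m ≤ ‖w‖ * M ^ m :=
        mul_le_mul_of_nonneg_left (pow_le_pow_left₀ (norm_nonneg _) hpM m) (norm_nonneg _)
      have hden : (1 + |x|) ^ (m + 1) ≤ 2 ^ (m + 2) * (‖(x:ℂ) - p‖ * |x| ^ m) := by
        calc (1 + |x|) ^ (m + 1) ≤ (2 * |x|) ^ (m + 1) := by
              apply pow_le_pow_left₀ (by positivity)
              linarith
          _ = 2 ^ (m + 1) * (|x| * |x| ^ m) := by rw [mul_pow]; ring
          _ ≤ 2 ^ (m + 2) * (‖(x:ℂ) - p‖ * |x| ^ m) := by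
              have h1 : |x| * |x| ^ m ≤ (2 * ‖(x:ℂ) - p‖) * |x| ^ m := by
                apply mul_le_mul_of_nonneg_right _ (by positivity)
                linarith
              calc 2 ^ (m + 1) * (|x| * |x| ^ m)
                  ≤ 2 ^ (m + 1) * ((2 * ‖(x:ℂ) - p‖) * |x| ^ m) := by
                    apply mul_le_mul_of_nonneg_left h1 (by positivity)
                _ = 2 ^ (m + 2) * (‖(x:ℂ) - p‖ * |x| ^ m) := by ring
      calc ‖w‖ * ‖p‖ ^ m * (1 + |x|) ^ (m + 1)
          ≤ (‖w‖ * M ^ m) * (2 ^ (m + 2) * (‖(x:ℂ) - p‖ * |x| ^ m)) :=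
            mul_le_mul hnum hden (by positivity) (by positivity)
        _ = 2 ^ (m + 2) * M ^ m * ‖w‖ * (‖(x:ℂ) - p‖ * |x| ^ m) := by ring
    -- the tail identity
    have hSx : S x = (∑ j, α j * a j ^ m / (((x:ℂ) - a j) * (x:ℂ) ^ m))
        - ∑ j, β j * b j ^ m / (((x:ℂ) - b j) * (x:ℂ) ^ m) := by
      rw [hS]
      simp only
      rw [Finset.sum_sub_distrib,
        rk_tail_sum hm α a (fun j => (haim j).ne') hα1 hαv x hx0,
        rk_tail_sum hm β b (fun j => (hbim j).ne) hβ1 hβv x hx0]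
      ring
    rw [hSx]
    have h1 : ‖(∑ j, α j * a j ^ m / (((x:ℂ) - a j) * (x:ℂ) ^ m))
        - ∑ j, β j * b j ^ m / (((x:ℂ) - b j) * (x:ℂ) ^ m)‖
        ≤ ∑ j, (‖α j * a j ^ m / (((x:ℂ) - a j) * (x:ℂ) ^ m)‖
            + ‖β j * b j ^ m / (((x:ℂ) - b j) * (x:ℂ) ^ m)‖) := by
      calc _ ≤ ‖∑ j, α j * a j ^ m / (((x:ℂ) - a j) * (x:ℂ) ^ m)‖
            + ‖∑ j, β j * b j ^ m / (((x:ℂ) - b j) * (x:ℂ) ^ m)‖ := norm_sub_le _ _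
        _ ≤ (∑ j, ‖α j * a j ^ m / (((x:ℂ) - a j) * (x:ℂ) ^ m)‖)
            + ∑ j, ‖β j * b j ^ m / (((x:ℂ) - b j) * (x:ℂ) ^ m)‖ :=
            add_le_add (norm_sum_le _ _) (norm_sum_le _ _)
        _ = _ := by rw [Finset.sum_add_distrib]
    refine h1.trans ?_
    have h2 : ∑ j, (‖α j * a j ^ m / (((x:ℂ) - a j) * (x:ℂ) ^ m)‖
            + ‖β j * b j ^ m / (((x:ℂ) - b j) * (x:ℂ) ^ m)‖)
        ≤ ∑ j, (2 ^ (m + 2) * M ^ m * ‖α j‖ / (1 + |x|) ^ (m + 1)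
            + 2 ^ (m + 2) * M ^ m * ‖β j‖ / (1 + |x|) ^ (m + 1)) := by
      refine Finset.sum_le_sum fun j _ => ?_
      exact add_le_add (hterm (α j) (a j) (hMa j)) (hterm (β j) (b j) (hMb j))
    refine h2.trans ?_
    have hDenpos : (0:ℝ) < (1 + |x|) ^ (m + 1) := by positivity
    have hsum_eq : ∑ j, (2 ^ (m + 2) * M ^ m * ‖α j‖ / (1 + |x|) ^ (m + 1)
            + 2 ^ (m + 2) * M ^ m * ‖β j‖ / (1 + |x|) ^ (m + 1))
        = (2 ^ (m + 2) * M ^ m * ∑ j, (‖α j‖ + ‖β j‖)) / (1 + |x|) ^ (m + 1) := by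
      rw [Finset.mul_sum, Finset.sum_div]
      refine Finset.sum_congr rfl fun j _ => ?_
      rw [← add_div, ← mul_add]
    rw [hsum_eq]
    exact (div_le_div_iff_of_pos_right hDenpos).mpr hD₁ge
  -- continuity on the compact part
  have hcont : Continuous fun x : ℝ => c₀ * S x := by
    apply continuous_const.mul
    apply continuous_finset_sum
    intro j _
    exact (continuous_const.div (by continuity) (fun x => rk_sub_ne (a j) (haim j).ne' x)).sub
      (continuous_const.div (by continuity) (fun x => rk_sub_ne (b j) (hbim j).ne x))
  obtain ⟨B, hB⟩ := (isCompact_Icc (a := -(2*M)) (b := 2*M)).exists_bound_of_continuousOn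
    hcont.continuousOn
  refine ⟨max D₁ ((max B 0) * (1 + 2*M) ^ (m+1)), lt_of_lt_of_le hD₁pos (le_max_left _ _), ?_⟩
  intro x
  have hDen : (0:ℝ) < (1 + |x|) ^ (m+1) := by positivity
  have hKS : ‖c₀ * S x‖ ≤ ‖S x‖ := by
    rw [norm_mul]
    exact mul_le_of_le_one_left (norm_nonneg _) hc₀n
  by_cases hxM : 2*M ≤ |x|
  · refine le_trans (hKS.trans (hbig x hxM)) ?_
    exact (div_le_div_iff_of_pos_right hDen).mpr (le_max_left _ _)
  · push_neg at hxM
    have hmem : x ∈ Set.Icc (-(2*M)) (2*M) := by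
      constructor <;> [linarith [neg_abs_le x]; linarith [le_abs_self x]]
    have h1 : ‖c₀ * S x‖ ≤ max B 0 := le_trans (hB x hmem) (le_max_left _ _)
    have h2 : (1 + |x|) ^ (m+1) ≤ (1 + 2*M) ^ (m+1) := by
      apply pow_le_pow_left₀ (by positivity)
      linarith
    have h3 : max B 0 ≤ (max B 0) * (1 + 2*M) ^ (m+1) / (1 + |x|) ^ (m+1) := by
      rw [le_div_iff₀ hDen]
      exact mul_le_mul_of_nonneg_left h2 (le_max_right _ _)
    refine (h1.trans h3).trans ?_
    exact (div_le_div_iff_of_pos_right hDen).mpr (le_max_right _ _)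

/-- The rational kernel `K(x) = (1/(2πi)) ∑_j (α_j/(x-a_j) - β_j/(x-b_j))`,
with poles `a_j` in the upper half-plane and `b_j` in the lower half-plane and
residues solving the Vandermonde systems (`∑α_j = ∑β_j = 1`,
`∑α_j a_j^ℓ = ∑β_j b_j^ℓ = 0` for `1 ≤ ℓ ≤ m-1`), is an `m`-th order kernel on
`ℝ`: it is normalized, has vanishing moments up to order `m-1`, and decays like
`(1+|x|)^{-(m+1)}`. -/
theorem rational_kernel_high_order
    (m : ℕ) (hm : 1 ≤ m)
    (a b : Fin m → ℂ) (ha : Function.Injective a) (hb : Function.Injective b)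
    (haim : ∀ j, 0 < (a j).im) (hbim : ∀ j, (b j).im < 0)
    (α β : Fin m → ℂ)
    (hα1 : ∑ j, α j = 1) (hβ1 : ∑ j, β j = 1)
    (hαv : ∀ ℓ : ℕ, 1 ≤ ℓ → ℓ ≤ m - 1 → ∑ j, α j * a j ^ ℓ = 0)
    (hβv : ∀ ℓ : ℕ, 1 ≤ ℓ → ℓ ≤ m - 1 → ∑ j, β j * b j ^ ℓ = 0) :
    (∫ x : ℝ, (1 / (2 * (Real.pi : ℂ) * Complex.I)) *
        ∑ j, (α j / ((x : ℂ) - a j) - β j / ((x : ℂ) - b j))) = 1 ∧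
    (∀ ℓ : ℕ, 1 ≤ ℓ → ℓ ≤ m - 1 →
      (∫ x : ℝ, ((1 / (2 * (Real.pi : ℂ) * Complex.I)) *
        ∑ j, (α j / ((x : ℂ) - a j) - β j / ((x : ℂ) - b j))) * (x : ℂ) ^ ℓ) = 0) ∧
    ∃ C : ℝ, 0 < C ∧ ∀ x : ℝ,
      ‖(1 / (2 * (Real.pi : ℂ) * Complex.I)) *
        ∑ j, (α j / ((x : ℂ) - a j) - β j / ((x : ℂ) - b j))‖ ≤
        C / (1 + |x|) ^ (m + 1) := by
  have h2πI : (2 * (Real.pi : ℂ) * Complex.I) ≠ 0 := by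
    simp [Real.pi_ne_zero, Complex.I_ne_zero]
  refine ⟨?_, ?_, rk_decay hm a b haim hbim α β hα1 hβ1 hαv hβv⟩
  · rw [MeasureTheory.integral_const_mul,
      rk_key_integral hm a b haim hbim α β (hα1.trans hβ1.symm), hα1]
    field_simp
  · intro ℓ hℓ1 hℓ2
    have hpt : (fun x : ℝ => ((1 / (2 * (Real.pi : ℂ) * Complex.I)) *
        ∑ j, (α j / ((x : ℂ) - a j) - β j / ((x : ℂ) - b j))) * (x : ℂ) ^ ℓ)
        = fun x : ℝ => (1 / (2 * (Real.pi : ℂ) * Complex.I)) *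
          ∑ j, (α j * a j ^ ℓ / ((x : ℂ) - a j) - β j * b j ^ ℓ / ((x : ℂ) - b j)) := by
      funext x
      rw [mul_assoc, rk_moment_shift a b haim hbim α β hα1 hβ1 hαv hβv ℓ hℓ1 hℓ2 x]
    rw [hpt, MeasureTheory.integral_const_mul,
      rk_key_integral hm a b haim hbim (fun j => α j * a j ^ ℓ) (fun j => β j * b j ^ ℓ)
        ((hαv ℓ hℓ1 hℓ2).trans (hβv ℓ hℓ1 hℓ2).symm),
      hαv ℓ hℓ1 hℓ2]
    simp
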